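/- For every even integer n = 2k ≥ 10, the spider Sp(2^[n]) admits a local antimagic total labeling f : V ∪ E → {1,...,8k+1} with exactly 3 distinct vertex weights, namely w(x) = 2k² + 4k + 1, w(u_i) = 9k + 3 for all i, and w(v_i) = 12k + 3 for all i; in particular χ_lat(Sp(2^[n])) ≤ 3 for even n ≥ 10. -/

import Mathlib

open Finset

variable {V : Type*} [Fintype V] [DecidableEq V]

/-- The weight of a vertex `u` under the total labeling given by vertex labels `fv`
and edge labels `fe` : `w(u) = f(u) + \sum_{e incident to u} f(e)`. -/
def latWeight (G : SimpleGraph V) [DecidableRel G.Adj]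
    (fv : V → ℕ) (fe : Sym2 V → ℕ) (u : V) : ℕ :=
  fv u + ∑ v ∈ G.neighborFinset u, fe s(u, v)

/-- `fv, fe` together form a bijection from `V(G) ∪ E(G)` onto `{1, …, p + q}`,
where `p` is the order and `q` is the size of `G`. -/
def IsTotalLabeling (G : SimpleGraph V) [DecidableRel G.Adj]
    (fv : V → ℕ) (fe : Sym2 V → ℕ) : Prop :=
  Set.BijOn (Sum.elim fv (fun e : G.edgeSet => fe (e : Sym2 V))) Set.univ
    (Set.Icc 1 (Fintype.card V + G.edgeFinset.card))

/-- A local antimagic total labeling of `G` : a bijective total labeling such that any two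
adjacent vertices get distinct weights. -/
def IsLocalAntimagicTotal (G : SimpleGraph V) [DecidableRel G.Adj]
    (fv : V → ℕ) (fe : Sym2 V → ℕ) : Prop :=
  IsTotalLabeling G fv fe ∧
    ∀ ⦃u v : V⦄, G.Adj u v → latWeight G fv fe u ≠ latWeight G fv fe v

/-- The local antimagic total chromatic number `χ_lat(G)` : the minimum number of distinct
vertex weights taken over all local antimagic total labelings of `G`. -/
noncomputable def chiLat (G : SimpleGraph V) [DecidableRel G.Adj] : ℕ :=
  sInf {c | ∃ fv fe, IsLocalAntimagicTotal G fv fe ∧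
    (Finset.univ.image (latWeight G fv fe)).card = c}

instance {W : Type*} (r : W → W → Prop) [DecidableEq W] [DecidableRel r] :
    DecidableRel (SimpleGraph.fromRel r).Adj :=
  fun a b => decidable_of_iff _ (SimpleGraph.fromRel_adj r a b).symm

/-- Adjacency for the spider `Sp(2^[n])` : the center `none` is adjacent to each middle
vertex `some (i, false)`, and `some (i, false)` is adjacent to the leaf `some (i, true)`. -/
def spider2R (n : ℕ) : Option (Fin n × Bool) → Option (Fin n × Bool) → Bool
  | none, some (_, false) => true
  | some (i, false), some (j, true) => decide (i = j)
  | _, _ => false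

/-- The spider `Sp(2^[n])` with `n` legs of length `2`. -/
abbrev spider2 (n : ℕ) : SimpleGraph (Option (Fin n × Bool)) :=
  SimpleGraph.fromRel (fun a b => spider2R n a b = true)

/-- For every even `n = 2k ≥ 10`, the spider `Sp(2^[n])` admits a local antimagic total
labeling (into `{1, …, 8k+1}`) with exactly `3` distinct vertex weights, namely
`w(x) = 2k² + 4k + 1`, `w(u_i) = 9k + 3` and `w(v_i) = 12k + 3`; in particular
`χ_lat(Sp(2^[n])) ≤ 3` for even `n ≥ 10`. -/
lemma spider2_adj {n : ℕ} (a b : Option (Fin n × Bool)) :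
    (spider2 n).Adj a b ↔ ∃ i : Fin n,
      (a = none ∧ b = some (i, false)) ∨ (a = some (i, false) ∧ b = none) ∨
      (a = some (i, false) ∧ b = some (i, true)) ∨
      (a = some (i, true) ∧ b = some (i, false)) := by
  rw [SimpleGraph.fromRel_adj]
  rcases a with _ | ⟨i, _ | _⟩ <;> rcases b with _ | ⟨j, _ | _⟩ <;>
    simp [spider2R] <;> aesop

lemma spider2_nbr_none {n : ℕ} :
    (spider2 n).neighborFinset none =
      (univ : Finset (Fin n)).image (fun i => some (i, false)) := by
  ext a
  simp only [SimpleGraph.mem_neighborFinset, spider2_adj, mem_image, mem_univ, true_and]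
  constructor
  · rintro ⟨i, h⟩
    rcases h with ⟨h1, h2⟩ | ⟨h1, h2⟩ | ⟨h1, h2⟩ | ⟨h1, h2⟩ <;> simp_all
  · rintro ⟨i, rfl⟩; exact ⟨i, by simp⟩

lemma spider2_nbr_mid {n : ℕ} (i : Fin n) :
    (spider2 n).neighborFinset (some (i, false)) = {none, some (i, true)} := by
  ext a
  simp only [SimpleGraph.mem_neighborFinset, spider2_adj, mem_insert, mem_singleton]
  constructor
  · rintro ⟨j, h⟩
    rcases h with ⟨h1, h2⟩ | ⟨h1, h2⟩ | ⟨h1, h2⟩ | ⟨h1, h2⟩ <;> simp_all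
  · rintro (rfl | rfl) <;> exact ⟨i, by simp⟩

lemma spider2_nbr_leaf {n : ℕ} (i : Fin n) :
    (spider2 n).neighborFinset (some (i, true)) = {some (i, false)} := by
  ext a
  simp only [SimpleGraph.mem_neighborFinset, spider2_adj, mem_singleton]
  constructor
  · rintro ⟨j, h⟩
    rcases h with ⟨h1, h2⟩ | ⟨h1, h2⟩ | ⟨h1, h2⟩ | ⟨h1, h2⟩ <;> simp_all
  · rintro rfl; exact ⟨i, by simp⟩

def spA (k : ℕ) (i : Fin (2 * k)) : ℕ :=
  if (i : ℕ) < k then 2 * k - 1 - 2 * i else 4 * k - 2 * i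

def spFv (k : ℕ) : Option (Fin (2 * k) × Bool) → ℕ
  | none => 3 * k + 1
  | some (i, false) => if (i : ℕ) < k then 3 * k + 2 + i else k + 1 + i
  | some (i, true) => 8 * k + 1 - i

def spG (k : ℕ) : Option (Fin (2 * k) × Bool) → Option (Fin (2 * k) × Bool) → ℕ
  | none, some (i, false) => spA k i
  | some (i, false), none => spA k i
  | some (i, false), some (j, true) => if i = j then 4 * k + 2 + (i : ℕ) else 0
  | some (j, true), some (i, false) => if i = j then 4 * k + 2 + (i : ℕ) else 0
  | _, _ => 0

lemma spG_symm (k : ℕ) : ∀ a b, spG k a b = spG k b a := by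
  rintro (_ | ⟨i, _ | _⟩) (_ | ⟨j, _ | _⟩) <;> simp [spG]

def spFe (k : ℕ) : Sym2 (Option (Fin (2 * k) × Bool)) → ℕ :=
  Sym2.lift ⟨spG k, spG_symm k⟩

@[simp] lemma spFe_mk (k : ℕ) (a b) : spFe k s(a, b) = spG k a b := rfl

lemma sum_odds (n : ℕ) : ∑ j ∈ Finset.range n, (2 * j + 1) = n ^ 2 := by
  induction n with
  | zero => simp
  | succ m ih => rw [Finset.sum_range_succ, ih]; ring

lemma sum_evens (n : ℕ) : ∑ j ∈ Finset.range n, (2 * j + 2) = n ^ 2 + n := by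
  induction n with
  | zero => simp
  | succ m ih => rw [Finset.sum_range_succ, ih]; ring

lemma sum_spA (k : ℕ) : ∑ i : Fin (2 * k), spA k i = 2 * k ^ 2 + k := by
  have h1 : ∀ i : Fin (2 * k), spA k i =
      (fun j : ℕ => if j < k then 2 * k - 1 - 2 * j else 4 * k - 2 * j) (i : ℕ) := fun i => rfl
  rw [Finset.sum_congr rfl (fun i _ => h1 i),
    Fin.sum_univ_eq_sum_range (fun j : ℕ => if j < k then 2 * k - 1 - 2 * j else 4 * k - 2 * j)]
  set f : ℕ → ℕ := fun j => if j < k then 2 * k - 1 - 2 * j else 4 * k - 2 * j with hf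
  rw [two_mul k, Finset.sum_range_add f k k, hf]
  simp only
  have h2 : ∀ j ∈ Finset.range k, (if j < k then 2 * k - 1 - 2 * j else 4 * k - 2 * j)
      = 2 * (k - 1 - j) + 1 := by
    intro j hj; rw [Finset.mem_range] at hj; rw [if_pos hj]; omega
  have h3 : ∀ j ∈ Finset.range k, (if k + j < k then 2 * k - 1 - 2 * (k + j) else 4 * k - 2 * (k + j))
      = 2 * (k - 1 - j) + 2 := by
    intro j hj; rw [Finset.mem_range] at hj; rw [if_neg (by omega)]; omega
  rw [Finset.sum_congr rfl h2, Finset.sum_congr rfl h3,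
    Finset.sum_range_reflect (fun j => 2 * j + 1) k,
    Finset.sum_range_reflect (fun j => 2 * j + 2) k]
  rw [sum_odds, sum_evens]; ring

lemma mid_inj (k : ℕ) : Function.Injective
    (fun i : Fin (2 * k) => (some (i, false) : Option (Fin (2 * k) × Bool))) := by
  intro a b h; simpa using h

lemma lw_none (k : ℕ) :
    latWeight (spider2 (2 * k)) (spFv k) (spFe k) none = 2 * k ^ 2 + 4 * k + 1 := by
  unfold latWeight
  rw [spider2_nbr_none, Finset.sum_image (fun a _ b _ h => mid_inj k h)]
  have : ∀ i : Fin (2 * k), spFe k s(none, some (i, false)) = spA k i := fun i => rfl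
  rw [Finset.sum_congr rfl (fun i _ => this i), sum_spA]
  show 3 * k + 1 + (2 * k ^ 2 + k) = 2 * k ^ 2 + 4 * k + 1
  ring

lemma lw_mid (k : ℕ) (i : Fin (2 * k)) :
    latWeight (spider2 (2 * k)) (spFv k) (spFe k) (some (i, false)) = 9 * k + 3 := by
  unfold latWeight
  rw [spider2_nbr_mid, Finset.sum_pair (by simp)]
  have h1 : spFe k s(some (i, false), none) = spA k i := rfl
  have h2 : spFe k s(some (i, false), some (i, true)) = 4 * k + 2 + (i : ℕ) := by
    simp only [spFe_mk]; simp [spG]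
  rw [h1, h2]
  have hi := i.isLt
  show (if (i : ℕ) < k then 3 * k + 2 + (i : ℕ) else k + 1 + (i : ℕ)) +
    ((if (i : ℕ) < k then 2 * k - 1 - 2 * (i : ℕ) else 4 * k - 2 * (i : ℕ)) +
      (4 * k + 2 + (i : ℕ))) = 9 * k + 3
  split <;> omega

lemma lw_leaf (k : ℕ) (i : Fin (2 * k)) :
    latWeight (spider2 (2 * k)) (spFv k) (spFe k) (some (i, true)) = 12 * k + 3 := by
  unfold latWeight
  rw [spider2_nbr_leaf, Finset.sum_singleton]
  have h2 : spFe k s(some (i, true), some (i, false)) = 4 * k + 2 + (i : ℕ) := by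
    simp only [spFe_mk]; simp [spG]
  rw [h2]
  have hi := i.isLt
  show 8 * k + 1 - (i : ℕ) + (4 * k + 2 + (i : ℕ)) = 12 * k + 3
  omega

lemma card_V (k : ℕ) : Fintype.card (Option (Fin (2 * k) × Bool)) = 4 * k + 1 := by
  simp [Fintype.card_option]; ring

lemma card_E (k : ℕ) : (spider2 (2 * k)).edgeFinset.card = 4 * k := by
  have h := SimpleGraph.sum_degrees_eq_twice_card_edges (spider2 (2 * k))
  rw [Fintype.sum_option] at h
  have hd0 : (spider2 (2 * k)).degree none = 2 * k := by
    rw [SimpleGraph.degree, spider2_nbr_none,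
      Finset.card_image_of_injective _ (mid_inj k)]
    simp
  have hds : ∀ p : Fin (2 * k) × Bool, (spider2 (2 * k)).degree (some p) =
      if p.2 then 1 else 2 := by
    rintro ⟨i, _ | _⟩
    · rw [SimpleGraph.degree, spider2_nbr_mid]; simp
    · rw [SimpleGraph.degree, spider2_nbr_leaf]; simp
  rw [hd0, Finset.sum_congr rfl (fun p _ => hds p)] at h
  rw [Fintype.sum_prod_type] at h
  simp only [Fintype.univ_bool, mem_singleton, Bool.true_eq_false, not_false_eq_true,
    sum_insert, reduceIte, sum_singleton, Bool.false_eq_true, Nat.reduceAdd, sum_const,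
    card_univ, Fintype.card_fin, smul_eq_mul, Set.toFinset_card, Fintype.card_ofFinset] at h
  rw [show (spider2 (2 * k)).edgeFinset = (spider2 (2 * k)).edgeSet.toFinset from rfl,
    Set.toFinset_card, Fintype.card_subtype]
  have h' : 2 * k + 2 * k * 3 =
      2 * #(Finset.filter (fun x => x ∈ (spider2 (2 * k)).edgeSet) Finset.univ) := by
    rw [Set.filter_mem_univ_eq_toFinset]; exact h
  omega

lemma edge_cases {k : ℕ} (e : Sym2 (Option (Fin (2 * k) × Bool)))
    (he : e ∈ (spider2 (2 * k)).edgeSet) :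
    ∃ i : Fin (2 * k), e = s(none, some (i, false)) ∨ e = s(some (i, false), some (i, true)) := by
  induction e with
  | _ a b =>
    rw [SimpleGraph.mem_edgeSet, spider2_adj] at he
    obtain ⟨i, h⟩ := he
    rcases h with ⟨rfl, rfl⟩ | ⟨rfl, rfl⟩ | ⟨rfl, rfl⟩ | ⟨rfl, rfl⟩
    · exact ⟨i, Or.inl rfl⟩
    · exact ⟨i, Or.inl (Sym2.eq_swap)⟩
    · exact ⟨i, Or.inr rfl⟩
    · exact ⟨i, Or.inr (Sym2.eq_swap)⟩

lemma spFe_spine (k : ℕ) (i : Fin (2 * k)) :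
    spFe k s(none, some (i, false)) = spA k i := rfl

lemma spFe_leg (k : ℕ) (i : Fin (2 * k)) :
    spFe k s(some (i, false), some (i, true)) = 4 * k + 2 + (i : ℕ) := by
  simp only [spFe_mk]; simp [spG]

lemma F_inj (k : ℕ) : Function.Injective
    (Sum.elim (spFv k) (fun e : (spider2 (2 * k)).edgeSet => spFe k (e : _))) := by
  intro x y h
  rcases x with v | ⟨e, he⟩ <;> rcases y with w | ⟨e', he'⟩
  · -- vertex vertex
    simp only [Sum.elim_inl] at h
    rcases v with _ | ⟨i, _ | _⟩ <;> rcases w with _ | ⟨j, _ | _⟩ <;>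
      simp only [spFv] at h <;>
      (try have hi := i.isLt) <;> (try have hj := j.isLt) <;>
      (try split_ifs at h) <;>
      first
        | rfl
        | (exfalso; omega)
        | (have hij : i = j := Fin.ext (by omega); subst hij; rfl)
  · -- vertex edge
    exfalso
    obtain ⟨j, hE | hE⟩ := edge_cases e' he' <;> subst hE <;>
      simp only [Sum.elim_inl, Sum.elim_inr, spFe_spine, spFe_leg, spA] at h <;>
      have hj := j.isLt <;>
      rcases v with _ | ⟨i, _ | _⟩ <;> simp only [spFv] at h <;>
      (try have hi := i.isLt) <;> (try split_ifs at h) <;> omega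
  · -- edge vertex
    exfalso
    obtain ⟨j, hE | hE⟩ := edge_cases e he <;> subst hE <;>
      simp only [Sum.elim_inl, Sum.elim_inr, spFe_spine, spFe_leg, spA] at h <;>
      have hj := j.isLt <;>
      rcases w with _ | ⟨i, _ | _⟩ <;> simp only [spFv] at h <;>
      (try have hi := i.isLt) <;> (try split_ifs at h) <;> omega
  · -- edge edge
    obtain ⟨i, hE | hE⟩ := edge_cases e he <;> obtain ⟨j, hE' | hE'⟩ := edge_cases e' he' <;>
      subst hE <;> subst hE' <;>
      simp only [Sum.elim_inr, spFe_spine, spFe_leg, spA] at h <;>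
      have hi := i.isLt <;> have hj := j.isLt <;>
      (try split_ifs at h) <;>
      first
        | (exfalso; omega)
        | (have hij : i = j := Fin.ext (by omega); subst hij; rfl)

lemma card_ES (k : ℕ) : Nat.card (spider2 (2 * k)).edgeSet = 4 * k := by
  have h := card_E k
  rw [show (spider2 (2 * k)).edgeFinset = (spider2 (2 * k)).edgeSet.toFinset from rfl,
    Set.toFinset_card] at h
  rw [Nat.card_eq_fintype_card]
  exact h

lemma F_mapsTo (k : ℕ) :
    ∀ z : Option (Fin (2 * k) × Bool) ⊕ (spider2 (2 * k)).edgeSet,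
      Sum.elim (spFv k) (fun e : (spider2 (2 * k)).edgeSet => spFe k (e : _)) z
        ∈ Set.Icc 1 (8 * k + 1) := by
  rintro (v | ⟨e, he⟩)
  · rcases v with _ | ⟨i, _ | _⟩ <;>
      simp only [Sum.elim_inl, spFv, Set.mem_Icc] <;>
      (try have hi := i.isLt) <;> (try split_ifs) <;> omega
  · obtain ⟨i, hE | hE⟩ := edge_cases e he <;> subst hE <;>
      simp only [Sum.elim_inr, spFe_spine, spFe_leg, spA, Set.mem_Icc] <;>
      have hi := i.isLt <;> (try split_ifs) <;> omega

lemma spider_total (k : ℕ) (hk : 1 ≤ k) :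
    IsTotalLabeling (spider2 (2 * k)) (spFv k) (spFe k) := by
  unfold IsTotalLabeling
  have hN : Fintype.card (Option (Fin (2 * k) × Bool)) + (spider2 (2 * k)).edgeFinset.card
      = 8 * k + 1 := by rw [card_V, card_E]; ring
  rw [hN]
  set F := Sum.elim (spFv k) (fun e : (spider2 (2 * k)).edgeSet => spFe k (e : _)) with hF
  have hmaps : Set.MapsTo F Set.univ (Set.Icc 1 (8 * k + 1)) := fun z _ => F_mapsTo k z
  have hrange : Set.range F = Set.Icc 1 (8 * k + 1) := by
    apply Set.eq_of_subset_of_ncard_le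
    · rw [← Set.image_univ]; exact Set.mapsTo_iff_image_subset.mp hmaps
    · rw [← Set.image_univ, Set.ncard_image_of_injective _ (F_inj k), Set.ncard_univ]
      rw [← Finset.coe_Icc, Set.ncard_coe_finset, Nat.card_Icc]
      rw [Nat.card_sum, Nat.card_eq_fintype_card, card_V, card_ES]
      omega
    · exact Set.finite_Icc _ _
  exact ⟨hmaps, (F_inj k).injOn, by
    rw [Set.SurjOn, Set.image_univ, hrange]⟩

theorem spider2_even_three_weights (k : ℕ) (hk : 5 ≤ k) :
    (∃ fv fe, IsLocalAntimagicTotal (spider2 (2 * k)) fv fe ∧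
      (Finset.univ.image (latWeight (spider2 (2 * k)) fv fe)).card = 3 ∧
      latWeight (spider2 (2 * k)) fv fe none = 2 * k ^ 2 + 4 * k + 1 ∧
      (∀ i : Fin (2 * k),
        latWeight (spider2 (2 * k)) fv fe (some (i, false)) = 9 * k + 3) ∧
      (∀ i : Fin (2 * k),
        latWeight (spider2 (2 * k)) fv fe (some (i, true)) = 12 * k + 3)) ∧
    chiLat (spider2 (2 * k)) ≤ 3 := by
  have hkk : k ^ 2 = k * k := sq k
  have hk5 : 5 * k ≤ k * k := Nat.mul_le_mul_right k hk
  have hanti : IsLocalAntimagicTotal (spider2 (2 * k)) (spFv k) (spFe k) := by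
    refine ⟨spider_total k (by omega), ?_⟩
    intro u v huv
    rw [spider2_adj] at huv
    obtain ⟨i, h⟩ := huv
    rcases h with ⟨rfl, rfl⟩ | ⟨rfl, rfl⟩ | ⟨rfl, rfl⟩ | ⟨rfl, rfl⟩ <;>
      simp only [lw_none k, lw_mid k i, lw_leaf k i] <;> omega
  have himg : Finset.univ.image (latWeight (spider2 (2 * k)) (spFv k) (spFe k)) =
      {2 * k ^ 2 + 4 * k + 1, 9 * k + 3, 12 * k + 3} := by
    apply Finset.ext; intro m
    simp only [Finset.mem_image, Finset.mem_univ, true_and, Finset.mem_insert,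
      Finset.mem_singleton]
    constructor
    · rintro ⟨v, rfl⟩
      rcases v with _ | ⟨i, _ | _⟩
      · exact Or.inl (lw_none k)
      · exact Or.inr (Or.inl (lw_mid k i))
      · exact Or.inr (Or.inr (lw_leaf k i))
    · rintro (rfl | rfl | rfl)
      · exact ⟨none, lw_none k⟩
      · exact ⟨some (⟨0, by omega⟩, false), lw_mid k _⟩
      · exact ⟨some (⟨0, by omega⟩, true), lw_leaf k _⟩
  have hcard : (Finset.univ.image (latWeight (spider2 (2 * k)) (spFv k) (spFe k))).card = 3 := by
    rw [himg]
    rw [Finset.card_insert_of_notMem (by simp; omega),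
      Finset.card_insert_of_notMem (by simp; omega), Finset.card_singleton]
  refine ⟨⟨spFv k, spFe k, hanti, hcard, lw_none k, fun i => lw_mid k i, fun i => lw_leaf k i⟩, ?_⟩
  exact Nat.sInf_le ⟨spFv k, spFe k, hanti, hcard⟩
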